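/- Every p×q layout can be transformed into a sorted p×q layout without increasing its width or its height: for every p×q layout A there exists a sorted p×q layout A' with W(A') ≤ W(A) and H(A') ≤ H(A). -/

import Mathlib

/-- A `p × q` layout: a matrix whose entries are exactly the integers `1, …, p*q`. -/
def IsLayout (p q : ℕ) (A : Fin p → Fin q → ℕ) : Prop :=
  Function.Injective (fun ij : Fin p × Fin q => A ij.1 ij.2) ∧
  (Set.range fun ij : Fin p × Fin q => A ij.1 ij.2) = Set.Icc 1 (p * q)

/-- Width of a layout with respect to side lengths `l`. -/
def layW (l : ℕ → ℕ) {p q : ℕ} (A : Fin p → Fin q → ℕ) : ℕ :=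
  ∑ j : Fin q, Finset.univ.sup fun i : Fin p => l (A i j)

/-- Height of a layout with respect to side lengths `l`. -/
def layH (l : ℕ → ℕ) {p q : ℕ} (A : Fin p → Fin q → ℕ) : ℕ :=
  ∑ i : Fin p, Finset.univ.sup fun j : Fin q => l (A i j)

/-- A layout is sorted if each row and each column is strictly increasing. -/
def IsSorted {p q : ℕ} (A : Fin p → Fin q → ℕ) : Prop :=
  (∀ i, StrictMono (A i)) ∧ (∀ j, StrictMono fun i => A i j)


open Finset

lemma sup_comp_perm {n : ℕ} (f : Fin n → ℕ) (e : Equiv.Perm (Fin n)) :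
    (Finset.univ.sup fun i => f (e i)) = Finset.univ.sup f := by
  apply le_antisymm
  · exact Finset.sup_le fun i _ => Finset.le_sup (Finset.mem_univ (e i))
  · refine Finset.sup_le fun i _ => ?_
    have h := Finset.le_sup (f := fun i => f (e i)) (Finset.mem_univ (e.symm i))
    simpa using h

lemma sum_eq_sum_card {q T : ℕ} (f : Fin q → ℕ) (hf : ∀ j, f j ≤ T) :
    ∑ j, f j = ∑ t ∈ Finset.range T, (Finset.univ.filter fun j => t < f j).card := by
  have h1 : ∀ j : Fin q, ((Finset.range T).filter fun t => t < f j).card = f j := by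
    intro j
    have h2 : (Finset.range T).filter (fun t => t < f j) = Finset.range (f j) := by
      ext t
      simp only [Finset.mem_filter, Finset.mem_range]
      exact ⟨fun h => h.2, fun h => ⟨lt_of_lt_of_le h (hf j), h⟩⟩
    rw [h2, Finset.card_range]
  calc ∑ j, f j = ∑ j, ((Finset.range T).filter fun t => t < f j).card :=
        Finset.sum_congr rfl fun j _ => (h1 j).symm
    _ = ∑ j, ∑ t ∈ Finset.range T, if t < f j then 1 else 0 :=
        Finset.sum_congr rfl fun j _ => Finset.card_filter _ _
    _ = ∑ t ∈ Finset.range T, ∑ j : Fin q, if t < f j then 1 else 0 := Finset.sum_comm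
    _ = _ := Finset.sum_congr rfl fun t _ => (Finset.card_filter _ _).symm

/-- Rearrangement: sorting each row in decreasing order does not increase the
sum of column maxima. -/
lemma sum_sup_sorted_le {p q : ℕ} (x : Fin p → Fin q → ℕ) (σ : Fin p → Equiv.Perm (Fin q))
    (hB : ∀ i, Antitone fun j => x i (σ i j)) :
    ∑ j : Fin q, Finset.univ.sup (fun i => x i (σ i j)) ≤
      ∑ j : Fin q, Finset.univ.sup (fun i => x i j) := by
  set M : Fin q → ℕ := fun j => Finset.univ.sup (fun i => x i (σ i j)) with hM
  set N : Fin q → ℕ := fun j => Finset.univ.sup (fun i => x i j) with hN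
  have hManti : Antitone M := by
    intro a b hab
    exact Finset.sup_le fun i _ => le_trans (hB i hab)
      (Finset.le_sup (f := fun i => x i (σ i a)) (Finset.mem_univ i))
  have key : ∀ t : ℕ, (Finset.univ.filter fun j => t < M j).card ≤
      (Finset.univ.filter fun j => t < N j).card := by
    intro t
    by_cases hS : (Finset.univ.filter fun j => t < M j).Nonempty
    · set S := Finset.univ.filter fun j => t < M j with hSdef
      set j₀ := S.max' hS with hj₀
      have hj₀mem : j₀ ∈ S := S.max'_mem hS
      have ht : t < M j₀ := (Finset.mem_filter.mp hj₀mem).2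
      obtain ⟨i₀, _, hi₀⟩ := Finset.lt_sup_iff.mp ht
      have hsub : S ⊆ Finset.Iic j₀ := fun j hj => Finset.mem_Iic.mpr (S.le_max' j hj)
      refine le_trans (Finset.card_le_card hsub) ?_
      refine Finset.card_le_card_of_injOn (fun j => σ i₀ j) ?_ ?_
      · intro j hj
        simp only [Finset.mem_coe, Finset.mem_filter, Finset.mem_univ, true_and]
        have h1 : x i₀ (σ i₀ j₀) ≤ x i₀ (σ i₀ j) := hB i₀ (Finset.mem_Iic.mp hj)
        have h2 : x i₀ (σ i₀ j) ≤ N (σ i₀ j) :=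
          Finset.le_sup (f := fun i => x i (σ i₀ j)) (Finset.mem_univ i₀)
        omega
      · exact fun a _ b _ hab => (σ i₀).injective hab
    · rw [Finset.not_nonempty_iff_eq_empty.mp hS]
      simp
  have hMT : ∀ j, M j ≤ (∑ j, M j) + (∑ j, N j) := fun j =>
    le_trans (Finset.single_le_sum (fun j _ => Nat.zero_le (M j)) (Finset.mem_univ j))
      (Nat.le_add_right _ _)
  have hNT : ∀ j, N j ≤ (∑ j, M j) + (∑ j, N j) := fun j =>
    le_trans (Finset.single_le_sum (fun j _ => Nat.zero_le (N j)) (Finset.mem_univ j))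
      (Nat.le_add_left _ _)
  refine (sum_eq_sum_card M hMT).trans_le
    (le_of_le_of_eq ?_ (sum_eq_sum_card N hNT).symm)
  exact Finset.sum_le_sum fun t _ => key t

/-- Classic lemma: after sorting each column, rows remain sorted. -/
lemma rows_stay_sorted {p q : ℕ} (B : Fin p → Fin q → ℕ)
    (hrow : ∀ i, StrictMono (B i))
    (τ : Fin q → Equiv.Perm (Fin p))
    (hcol : ∀ j, StrictMono fun i => B (τ j i) j) :
    ∀ i, StrictMono fun j => B (τ j i) j := by
  intro i j j' hjj'
  by_contra hcon
  push_neg at hcon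
  have hsub : (Finset.Iic i).image (fun i'' => τ j' i'') ⊆
      Finset.univ.filter fun r => B r j < B (τ j i) j := by
    intro r hr
    obtain ⟨i'', hi'', rfl⟩ := Finset.mem_image.mp hr
    simp only [Finset.mem_filter, Finset.mem_univ, true_and]
    calc B (τ j' i'') j < B (τ j' i'') j' := hrow _ hjj'
      _ ≤ B (τ j' i) j' := (hcol j').monotone (Finset.mem_Iic.mp hi'')
      _ ≤ B (τ j i) j := hcon
  have hcard1 : ((Finset.Iic i).image (fun i'' => τ j' i'')).card = (i : ℕ) + 1 := by
    rw [Finset.card_image_of_injective _ (τ j').injective, Fin.card_Iic]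
  have hcard2 : (Finset.univ.filter fun r => B r j < B (τ j i) j).card ≤ (i : ℕ) := by
    have h := Finset.card_le_card_of_injOn (fun r => (τ j).symm r)
      (s := Finset.univ.filter fun r => B r j < B (τ j i) j) (t := Finset.Iio i) ?_ ?_
    · simpa [Fin.card_Iio] using h
    · intro r hr
      simp only [Finset.mem_coe, Finset.mem_filter, Finset.mem_univ, true_and] at hr
      simp only [Finset.mem_coe, Finset.mem_Iio]
      by_contra hge
      push_neg at hge
      have : B (τ j i) j ≤ B (τ j ((τ j).symm r)) j := (hcol j).monotone hge
      rw [Equiv.apply_symm_apply] at this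
      omega
    · exact fun a _ b _ hab => (τ j).symm.injective hab
  have := Finset.card_le_card hsub
  omega

/-- Every `p × q` layout can be transformed into a sorted `p × q` layout
without increasing its width or its height. -/
theorem sorted_layout_exists (p q : ℕ) (hp : 0 < p) (hq : 0 < q) (l : ℕ → ℕ)
    (hl : ∀ a b, 1 ≤ a → a ≤ b → l b ≤ l a)
    (A : Fin p → Fin q → ℕ) (hA : IsLayout p q A) :
    ∃ A' : Fin p → Fin q → ℕ, IsLayout p q A' ∧ IsSorted A' ∧
      layW l A' ≤ layW l A ∧ layH l A' ≤ layH l A := by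
  obtain ⟨hinj, hrange⟩ := hA
  have hge1 : ∀ i j, 1 ≤ A i j := by
    intro i j
    have h : A i j ∈ Set.Icc 1 (p * q) := by
      rw [← hrange]; exact ⟨(i, j), rfl⟩
    exact h.1
  -- Step 1: sort each row
  set σ : Fin p → Equiv.Perm (Fin q) := fun i => Tuple.sort (A i) with hσ
  set B : Fin p → Fin q → ℕ := fun i j => A i (σ i j) with hBdef
  have hBinj : Function.Injective (fun ij : Fin p × Fin q => B ij.1 ij.2) := by
    intro a b hab
    have h := hinj (a₁ := (a.1, σ a.1 a.2)) (a₂ := (b.1, σ b.1 b.2)) hab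
    obtain ⟨h1, h2⟩ := Prod.ext_iff.mp h
    rw [h1] at h2
    have h3 : a.2 = b.2 := (σ b.1).injective h2
    exact Prod.ext h1 h3
  have hBrow : ∀ i, StrictMono (B i) := by
    intro i
    have hm : Monotone (B i) := Tuple.monotone_sort (A i)
    refine hm.strictMono_of_injective fun a b hab => ?_
    have h := hBinj (a₁ := (i, a)) (a₂ := (i, b)) hab
    exact (Prod.ext_iff.mp h).2
  have hBge1 : ∀ i j, 1 ≤ B i j := fun i j => hge1 i (σ i j)
  -- Step 2: sort each column of B
  set τ : Fin q → Equiv.Perm (Fin p) := fun j => Tuple.sort (fun i => B i j) with hτ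
  set C : Fin p → Fin q → ℕ := fun i j => B (τ j i) j with hCdef
  have hCcol : ∀ j, StrictMono fun i => C i j := by
    intro j
    have hm : Monotone fun i => B (τ j i) j := Tuple.monotone_sort (fun i => B i j)
    refine hm.strictMono_of_injective fun a b hab => ?_
    have h := hBinj (a₁ := (τ j a, j)) (a₂ := (τ j b, j)) hab
    exact (τ j).injective (Prod.ext_iff.mp h).1
  have hCrow : ∀ i, StrictMono fun j => C i j :=
    rows_stay_sorted B hBrow τ hCcol
  -- C is a layout
  let e2 : Fin p × Fin q ≃ Fin p × Fin q :=
    { toFun := fun ij => (τ ij.2 ij.1, ij.2)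
      invFun := fun ij => ((τ ij.2).symm ij.1, ij.2)
      left_inv := fun ij => by simp
      right_inv := fun ij => by simp }
  let e1 : Fin p × Fin q ≃ Fin p × Fin q :=
    { toFun := fun ij => (ij.1, σ ij.1 ij.2)
      invFun := fun ij => (ij.1, (σ ij.1).symm ij.2)
      left_inv := fun ij => by simp
      right_inv := fun ij => by simp }
  have hfun : (fun ij : Fin p × Fin q => C ij.1 ij.2)
      = (fun ij : Fin p × Fin q => A ij.1 ij.2) ∘ (e1 ∘ e2) := rfl
  have hClayout : IsLayout p q C := by
    constructor
    · rw [hfun]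
      exact hinj.comp ((e1.injective).comp e2.injective)
    · rw [← hrange, hfun]
      exact ((e1.surjective).comp e2.surjective).range_comp _
  -- width
  have hWBA : layW l B ≤ layW l A := by
    refine sum_sup_sorted_le (fun i j => l (A i j)) σ fun i a b hab => ?_
    exact hl _ _ (hge1 i (σ i a)) ((Tuple.monotone_sort (A i)) hab)
  have hWCB : layW l C = layW l B := by
    refine Finset.sum_congr rfl fun j _ => ?_
    exact sup_comp_perm (fun i => l (B i j)) (τ j)
  -- height
  have hHBA : layH l B = layH l A := by
    refine Finset.sum_congr rfl fun i _ => ?_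
    exact sup_comp_perm (fun j => l (A i j)) (σ i)
  have hHCB : layH l C ≤ layH l B := by
    refine sum_sup_sorted_le (fun j i => l (B i j)) τ fun j a b hab => ?_
    exact hl _ _ (hBge1 (τ j a) j) ((Tuple.monotone_sort (fun i => B i j)) hab)
  exact ⟨C, hClayout, ⟨hCrow, hCcol⟩, hWCB.le.trans hWBA, hHCB.trans hHBA.le⟩
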